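/- Let Γ be a linearly ordered abelian group and I a right ideal of R. Then the left annihilator in the Hahn series ring R((Γ)) of I((Γ)) equals ℓ_R(I)((Γ)), i.e., a Hahn series f annihilates I((Γ)) on the left if and only if every coefficient of f lies in the left annihilator ℓ_R(I) of I in R. -/

import Mathlib

/-- A right ideal (as a subset). -/
def IsRightIdeal {R : Type*} [Ring R] (I : Set R) : Prop :=
  0 ∈ I ∧ (∀ a ∈ I, ∀ b ∈ I, a + b ∈ I) ∧ (∀ a ∈ I, -a ∈ I) ∧
    ∀ a ∈ I, ∀ r : R, a * r ∈ I

/-- A Hahn series `f` left-annihilates `I((Γ))` iff every coefficient of `f`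
lies in the left annihilator `ℓ_R(I)` of `I` in `R`. -/
theorem hahnSeries_left_annihilator {R : Type*} [Ring R] (Γ : Type*)
    [AddCommGroup Γ] [LinearOrder Γ] [IsOrderedAddMonoid Γ] (I : Set R) (hI : IsRightIdeal I)
    (f : HahnSeries Γ R) :
    (∀ g : HahnSeries Γ R, (∀ γ : Γ, g.coeff γ ∈ I) → f * g = 0) ↔
      ∀ γ : Γ, ∀ a ∈ I, f.coeff γ * a = 0 := by
  constructor
  · intro h γ a ha
    have hg : ∀ δ : Γ, (HahnSeries.single (0 : Γ) a).coeff δ ∈ I := by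
      intro δ
      rcases eq_or_ne δ 0 with rfl | hδ
      · simpa using ha
      · simp [HahnSeries.coeff_single_of_ne hδ, hI.1]
    have := h _ hg
    have := congrArg (fun x => HahnSeries.coeff x γ) this
    simpa [HahnSeries.coeff_mul_single_zero] using this
  · intro h g hg
    ext γ
    rw [HahnSeries.coeff_mul]
    simp only [HahnSeries.coeff_zero]
    exact Finset.sum_eq_zero fun ij _ => h ij.1 _ (hg ij.2)
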